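/- With T, A, μ₀ as above (T Fredholm of index zero, A compact relative to T, T + μ₀A invertible), the resolvent-type family μ ↦ (T + μA)^{-1}, defined on the complement of the discrete set Σ where T + μA fails to be invertible, is a meromorphic operator-valued function of μ on all of ℂ. -/

import Mathlib

open ContinuousLinearMap Metric

namespace Stmt2Aux


/-- Composition of analytic CLM-valued families is analytic. -/
lemma analyticAt_clm_comp {E F G : Type*} [NormedAddCommGroup E] [NormedSpace ℂ E]
    [NormedAddCommGroup F] [NormedSpace ℂ F] [NormedAddCommGroup G] [NormedSpace ℂ G]
    {f : ℂ → F →L[ℂ] G} {g : ℂ → E →L[ℂ] F} {z : ℂ}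
    (hf : AnalyticAt ℂ f z) (hg : AnalyticAt ℂ g z) :
    AnalyticAt ℂ (fun μ => (f μ).comp (g μ)) z :=
  ((ContinuousLinearMap.compL ℂ E F G).analyticAt_bilinear (f z, g z)).comp₂ hf hg

/-- The determinant of a matrix with analytic entries is analytic. -/
lemma analyticAt_det {n : ℕ} {M : ℂ → Matrix (Fin n) (Fin n) ℂ} {z : ℂ}
    (h : ∀ i j, AnalyticAt ℂ (fun μ => M μ i j) z) :
    AnalyticAt ℂ (fun μ => (M μ).det) z := by
  simp only [Matrix.det_apply']
  exact Finset.analyticAt_fun_sum _ fun σ _ =>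
    analyticAt_const.mul (Finset.analyticAt_fun_prod _ fun i _ => h (σ i) i)

/-- If `1 + a ∘ b` has two-sided inverse `P`, then `1 + b ∘ a` has two-sided inverse
`1 - b ∘ P ∘ a`. -/
lemma oneAdd_comp_inv {X Y : Type*} [NormedAddCommGroup X] [NormedSpace ℂ X]
    [NormedAddCommGroup Y] [NormedSpace ℂ Y]
    (a : X →L[ℂ] Y) (b : Y →L[ℂ] X) (P : Y →L[ℂ] Y)
    (h1 : (1 + a.comp b).comp P = 1) (h2 : P.comp (1 + a.comp b) = 1) :
    (1 + b.comp a).comp (1 - b.comp (P.comp a)) = 1 ∧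
    (1 - b.comp (P.comp a)).comp (1 + b.comp a) = 1 := by
  have h1' : ∀ y : Y, P y + a (b (P y)) = y := by
    intro y
    have := ContinuousLinearMap.ext_iff.1 h1 y
    simpa using this
  have h2' : ∀ y : Y, P (y + a (b y)) = y := by
    intro y
    have := ContinuousLinearMap.ext_iff.1 h2 y
    simpa using this
  constructor <;> ext x
  · have key := congrArg b (h1' (a x))
    simp only [map_add] at key
    simp only [ContinuousLinearMap.comp_apply, ContinuousLinearMap.add_apply,
      ContinuousLinearMap.sub_apply, ContinuousLinearMap.one_apply, map_sub, map_add,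
      ContinuousLinearMap.coe_comp', Function.comp_apply, ContinuousLinearMap.coe_sub',
      ContinuousLinearMap.coe_add', ContinuousLinearMap.one_apply]
    rw [key]
    abel
  · have key0 := h2' (a x)
    simp only [map_add] at key0
    have key := congrArg b key0
    simp only [map_add] at key
    simp only [ContinuousLinearMap.comp_apply, ContinuousLinearMap.add_apply,
      ContinuousLinearMap.sub_apply, ContinuousLinearMap.one_apply, map_sub, map_add,
      ContinuousLinearMap.coe_comp', Function.comp_apply, ContinuousLinearMap.coe_sub',
      ContinuousLinearMap.coe_add', ContinuousLinearMap.one_apply]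
    rw [show x - b (P (a x)) + (b (a x) - b (P (a (b (a x))))) =
      x + (b (a x) - (b (P (a x)) + b (P (a (b (a x)))))) from by abel, key]
    simp



/-- A compact operator on a Hilbert space can be approximated in norm by finite-rank ones. -/
lemma exists_finrank_approx {H₁ : Type*} [NormedAddCommGroup H₁] [InnerProductSpace ℂ H₁]
    [CompleteSpace H₁] (K : H₁ →L[ℂ] H₁) (hK : IsCompactOperator (⇑K)) {ε : ℝ} (hε : 0 < ε) :
    ∃ (V : Submodule ℂ H₁) (_ : FiniteDimensional ℂ V) (F : H₁ →L[ℂ] V),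
      ‖K - V.subtypeL.comp F‖ ≤ ε := by
  obtain ⟨M, hMc, hM⟩ := hK.image_closedBall_subset_compact 1
  obtain ⟨t, htfin, htcov⟩ := (totallyBounded_iff).1 hMc.totallyBounded ε hε
  set V := Submodule.span ℂ t with hV
  haveI : FiniteDimensional ℂ V := FiniteDimensional.span_of_finite ℂ htfin
  set F : H₁ →L[ℂ] V := (Submodule.orthogonalProjectionOnto V).comp K with hF
  refine ⟨V, inferInstance, F, ?_⟩
  set D := K - V.subtypeL.comp F with hD
  have hunit : ∀ y : H₁, ‖y‖ ≤ 1 → ‖D y‖ ≤ ε := by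
    intro y hy
    have hKy : K y ∈ M := hM ⟨y, by simpa [dist_eq_norm] using hy, rfl⟩
    obtain ⟨w, hw, hKw⟩ := Set.mem_iUnion₂.1 (htcov hKy)
    have hwV : w ∈ V := Submodule.subset_span hw
    have hmin : ‖K y - (Submodule.orthogonalProjectionOnto V (K y) : H₁)‖ ≤ ‖K y - w‖ := by
      rw [← Submodule.starProjection_apply, Submodule.starProjection_minimal]
      exact ciInf_le ⟨0, Set.forall_mem_range.mpr fun _ => norm_nonneg _⟩ (⟨w, hwV⟩ : V)
    have : ‖D y‖ = ‖K y - (Submodule.orthogonalProjectionOnto V (K y) : H₁)‖ := by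
      simp [hD, hF, ContinuousLinearMap.sub_apply]
    rw [this]
    exact hmin.trans (le_of_lt (by simpa [dist_eq_norm] using hKw))
  refine ContinuousLinearMap.opNorm_le_bound _ hε.le fun x => ?_
  rcases eq_or_ne x 0 with rfl | hx
  · simp
  · have hnx : (0:ℝ) < ‖x‖ := norm_pos_iff.2 hx
    set y : H₁ := ((‖x‖ : ℂ))⁻¹ • x with hy
    have hny : ‖y‖ = 1 := by
      rw [hy, norm_smul]
      simp [norm_inv, hnx.ne']
    have hxy : x = ((‖x‖ : ℂ)) • y := by
      rw [hy, smul_smul]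
      rw [mul_inv_cancel₀ (by exact_mod_cast hnx.ne'), one_smul]
    calc ‖D x‖ = ‖((‖x‖ : ℂ)) • D y‖ := by rw [← map_smul, ← hxy]
    _ = ‖x‖ * ‖D y‖ := by rw [norm_smul]; simp
    _ ≤ ‖x‖ * ε := by
        exact mul_le_mul_of_nonneg_left (hunit y hny.le) (norm_nonneg x)
    _ = ε * ‖x‖ := mul_comm _ _

lemma findim_inverse_det {V : Type*} [NormedAddCommGroup V] [NormedSpace ℂ V]
    [FiniteDimensional ℂ V] (W : ℂ → V →L[ℂ] V) :
    ∃ (d : ℂ → ℂ) (Q : ℂ → V →L[ℂ] V),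
      (∀ z : ℂ, AnalyticAt ℂ W z → AnalyticAt ℂ d z) ∧
      (∀ z : ℂ, AnalyticAt ℂ W z → AnalyticAt ℂ Q z) ∧
      (∀ μ : ℂ, (∃ P : V →L[ℂ] V, (W μ).comp P = 1 ∧ P.comp (W μ) = 1) ↔ d μ ≠ 0) ∧
      (∀ μ : ℂ, d μ ≠ 0 → (W μ).comp ((d μ)⁻¹ • Q μ) = 1 ∧ ((d μ)⁻¹ • Q μ).comp (W μ) = 1) := by
  classical
  set n := Module.finrank ℂ V with hn
  set b : Module.Basis (Fin n) ℂ V := Module.finBasis ℂ V with hb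
  set Amat : ℂ → Matrix (Fin n) (Fin n) ℂ := fun μ => LinearMap.toMatrix b b (W μ) with hA
  set d : ℂ → ℂ := fun μ => (Amat μ).det with hd
  set Ψ : Matrix (Fin n) (Fin n) ℂ →ₗ[ℂ] (V →L[ℂ] V) :=
    (LinearMap.toContinuousLinearMap.toLinearMap.comp (Matrix.toLin b b).toLinearMap) with hΨ
  set Q : ℂ → V →L[ℂ] V := fun μ => Ψ ((Amat μ).adjugate) with hQ
  have hΨcoe : ∀ M : Matrix (Fin n) (Fin n) ℂ, (Ψ M : V →ₗ[ℂ] V) = Matrix.toLin b b M := by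
    intro M
    simp [hΨ]
  -- analyticity of entries
  have hentry : ∀ (z : ℂ) (i j : Fin n), AnalyticAt ℂ W z →
      AnalyticAt ℂ (fun μ => Amat μ i j) z := by
    intro z i j hW
    have h2 : AnalyticAt ℂ (fun μ =>
        (LinearMap.toContinuousLinearMap (b.coord i)) ((W μ) (b j))) z :=
      ((LinearMap.toContinuousLinearMap (b.coord i)).analyticAt _).comp
        (((ContinuousLinearMap.apply ℂ V (b j)).analyticAt _).comp hW)
    have : (fun μ => Amat μ i j) = fun μ =>
        (LinearMap.toContinuousLinearMap (b.coord i)) ((W μ) (b j)) := by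
      funext μ
      simp [hA, LinearMap.toMatrix_apply, Module.Basis.coord_apply]
    rw [this]; exact h2
  have hadjentry : ∀ (z : ℂ) (i j : Fin n), AnalyticAt ℂ W z →
      AnalyticAt ℂ (fun μ => (Amat μ).adjugate i j) z := by
    intro z i j hW
    have : (fun μ => (Amat μ).adjugate i j)
        = fun μ => ((Amat μ).updateRow j (Pi.single i 1)).det := by
      funext μ; rw [Matrix.adjugate_apply]
    rw [this]
    apply analyticAt_det
    intro k l
    rcases eq_or_ne k j with rfl | hkj
    · simp only [Matrix.updateRow_self]
      exact analyticAt_const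
    · simp only [Matrix.updateRow_ne hkj]
      exact hentry z k l hW
  -- the key algebraic inverse statement
  have hinv : ∀ μ : ℂ, d μ ≠ 0 →
      (W μ).comp ((d μ)⁻¹ • Q μ) = 1 ∧ ((d μ)⁻¹ • Q μ).comp (W μ) = 1 := by
    intro μ hdμ
    have hWA : (W μ : V →ₗ[ℂ] V) = Matrix.toLin b b (Amat μ) := by
      rw [hA]; exact (Matrix.toLin_toMatrix b b _).symm
    have hQA : (Q μ : V →ₗ[ℂ] V) = Matrix.toLin b b ((Amat μ).adjugate) := hΨcoe _
    constructor
    · apply ContinuousLinearMap.coe_injective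
      have : ((W μ).comp ((d μ)⁻¹ • Q μ) : V →ₗ[ℂ] V)
          = Matrix.toLin b b (Amat μ * ((d μ)⁻¹ • (Amat μ).adjugate)) := by
        rw [Matrix.toLin_mul b b b, map_smul]
        rw [ContinuousLinearMap.toLinearMap_comp, hWA, ContinuousLinearMap.coe_smul, hQA]
      rw [this, mul_smul_comm, Matrix.mul_adjugate, smul_smul, inv_mul_cancel₀ hdμ, one_smul,
        Matrix.toLin_one]
      rfl
    · apply ContinuousLinearMap.coe_injective
      have : (((d μ)⁻¹ • Q μ).comp (W μ) : V →ₗ[ℂ] V)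
          = Matrix.toLin b b (((d μ)⁻¹ • (Amat μ).adjugate) * Amat μ) := by
        rw [Matrix.toLin_mul b b b, map_smul]
        rw [ContinuousLinearMap.toLinearMap_comp, hWA, ContinuousLinearMap.coe_smul, hQA]
      rw [this, smul_mul_assoc, Matrix.adjugate_mul, smul_smul, inv_mul_cancel₀ hdμ, one_smul,
        Matrix.toLin_one]
      rfl
  refine ⟨d, Q, ?_, ?_, ?_, hinv⟩
  · intro z hW
    exact analyticAt_det (fun i j => hentry z i j hW)
  · intro z hW
    have hrw : Q = fun μ => ∑ i : Fin n, ∑ j : Fin n,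
        ((Amat μ).adjugate i j) • Ψ (Matrix.single i j 1) := by
      funext μ
      show Ψ ((Amat μ).adjugate) = _
      conv_lhs => rw [Matrix.matrix_eq_sum_single ((Amat μ).adjugate)]
      rw [map_sum]
      refine Finset.sum_congr rfl fun i _ => ?_
      rw [map_sum]
      refine Finset.sum_congr rfl fun j _ => ?_
      rw [← map_smul, Matrix.smul_single, smul_eq_mul, mul_one]
    rw [hrw]
    apply Finset.analyticAt_fun_sum
    intro i _
    apply Finset.analyticAt_fun_sum
    intro j _
    exact (hadjentry z i j hW).smul analyticAt_const
  · intro μ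
    constructor
    · rintro ⟨P, hP1, hP2⟩
      have : LinearMap.toMatrix b b (P : V →ₗ[ℂ] V) * Amat μ = 1 := by
        rw [hA, ← LinearMap.toMatrix_comp b b b, ← ContinuousLinearMap.toLinearMap_comp, hP2]
        rw [ContinuousLinearMap.one_def, ContinuousLinearMap.coe_id, LinearMap.toMatrix_id]
      have := Matrix.isUnit_det_of_left_inverse this
      exact isUnit_iff_ne_zero.mp this
    · intro hdμ
      exact ⟨(d μ)⁻¹ • Q μ, hinv μ hdμ⟩

/-- Local structure of the family `1 + (μ - μ₀) • K` for a compact operator `K`: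
on the ball of radius 1 around any `z`, there is an analytic determinant `d` and an
analytic numerator `N` with inverse `(d μ)⁻¹ • N μ` where `d μ ≠ 0`. -/
lemma local_structure {H₁ : Type*} [NormedAddCommGroup H₁] [InnerProductSpace ℂ H₁]
    [CompleteSpace H₁] (K : H₁ →L[ℂ] H₁) (hK : IsCompactOperator (⇑K)) (μ₀ z : ℂ) :
    ∃ (d : ℂ → ℂ) (N : ℂ → H₁ →L[ℂ] H₁),
      (∀ w ∈ ball z 1, AnalyticAt ℂ d w) ∧ (∀ w ∈ ball z 1, AnalyticAt ℂ N w) ∧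
      ∀ μ ∈ ball z 1,
        ((∃ G : H₁ →L[ℂ] H₁, (1 + (μ - μ₀) • K) * G = 1 ∧ G * (1 + (μ - μ₀) • K) = 1) ↔
          d μ ≠ 0) ∧
        (d μ ≠ 0 → (1 + (μ - μ₀) • K) * ((d μ)⁻¹ • N μ) = 1 ∧
          ((d μ)⁻¹ • N μ) * (1 + (μ - μ₀) • K) = 1) := by
  classical
  set ε : ℝ := (‖z - μ₀‖ + 2)⁻¹ with hε
  have hεpos : 0 < ε := by positivity
  obtain ⟨V, hfin, F, hF⟩ := exists_finrank_approx K hK hεpos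
  haveI := hfin
  set j : V →L[ℂ] H₁ := V.subtypeL with hj
  set K₂ : H₁ →L[ℂ] H₁ := K - j.comp F with hK₂
  set C : ℂ → H₁ →L[ℂ] H₁ := fun μ => 1 + (μ - μ₀) • K₂ with hC
  have hsmall : ∀ μ ∈ ball z 1, ‖(μ - μ₀) • K₂‖ < 1 := by
    intro μ hμ
    have h1 : ‖μ - μ₀‖ < ‖z - μ₀‖ + 2 := by
      calc ‖μ - μ₀‖ ≤ ‖μ - z‖ + ‖z - μ₀‖ := by
            simpa using norm_sub_le_norm_sub_add_norm_sub μ z μ₀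
      _ < 1 + ‖z - μ₀‖ := by
            have := mem_ball.mp hμ
            rw [dist_eq_norm] at this
            simpa using this
      _ ≤ ‖z - μ₀‖ + 2 := by linarith
    calc ‖(μ - μ₀) • K₂‖ = ‖μ - μ₀‖ * ‖K₂‖ := by
          rw [norm_smul]
    _ ≤ ‖μ - μ₀‖ * ε := by
          exact mul_le_mul_of_nonneg_left hF (norm_nonneg _)
    _ < (‖z - μ₀‖ + 2) * ε := by
          exact mul_lt_mul_of_pos_right h1 hεpos
    _ = 1 := by
          rw [hε, mul_inv_cancel₀ (by positivity)]
  have hCunit : ∀ μ ∈ ball z 1, IsUnit (C μ) := by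
    intro μ hμ
    have h := hsmall μ hμ
    have : ‖-((μ - μ₀) • K₂)‖ < 1 := by rwa [norm_neg]
    refine ⟨Units.oneSub _ this, ?_⟩
    simp [Units.oneSub, hC, sub_neg_eq_add]
  set Ci : ℂ → H₁ →L[ℂ] H₁ := fun μ => Ring.inverse (C μ) with hCi
  have hCanal : ∀ w : ℂ, AnalyticAt ℂ C w := fun w =>
    analyticAt_const.add ((analyticAt_id.sub analyticAt_const).smul analyticAt_const)
  have hCianal : ∀ w ∈ ball z 1, AnalyticAt ℂ Ci w := by
    intro w hw
    exact ((hCunit w hw).unit_spec ▸ analyticAt_inverse (𝕜 := ℂ) (hCunit w hw).unit).comp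
      (hCanal w)
  set m : ℂ → H₁ →L[ℂ] V := fun μ => (μ - μ₀) • (F.comp (Ci μ)) with hm
  have hmanal : ∀ w ∈ ball z 1, AnalyticAt ℂ m w := by
    intro w hw
    haveI : IsBoundedSMul ℂ (H₁ →L[ℂ] V) := NormedSpace.toIsBoundedSMul (𝕜 := ℂ) (E := H₁ →L[ℂ] V)
    exact (analyticAt_id.sub analyticAt_const).smul
      (analyticAt_clm_comp analyticAt_const (hCianal w hw))
  set W : ℂ → V →L[ℂ] V := fun μ => 1 + (m μ).comp j with hW
  have hWanal : ∀ w ∈ ball z 1, AnalyticAt ℂ W w := by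
    intro w hw
    exact analyticAt_const.add (analyticAt_clm_comp (hmanal w hw) analyticAt_const)
  obtain ⟨d, Q, hdanal, hQanal, hdiff, hdinv⟩ := findim_inverse_det W
  set N : ℂ → H₁ →L[ℂ] H₁ :=
    fun μ => d μ • Ci μ - Ci μ * (j.comp ((Q μ).comp (m μ))) with hN
  -- the factorization
  have hfac : ∀ μ ∈ ball z 1, (1 + (μ - μ₀) • K) = (1 + j.comp (m μ)) * C μ := by
    intro μ hμ
    have hCiC : Ci μ * C μ = 1 := Ring.inverse_mul_cancel _ (hCunit μ hμ)
    have h1 : (m μ).comp (C μ) = (μ - μ₀) • F := by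
      rw [hm]
      rw [ContinuousLinearMap.smul_comp, ContinuousLinearMap.comp_assoc]
      rw [← ContinuousLinearMap.mul_def (Ci μ) (C μ), hCiC]
      simp [ContinuousLinearMap.one_def]
    symm
    calc (1 + j.comp (m μ)) * C μ = C μ + (j.comp (m μ)).comp (C μ) := by
          rw [add_mul, one_mul, ContinuousLinearMap.mul_def]
    _ = C μ + j.comp ((m μ).comp (C μ)) := by rw [ContinuousLinearMap.comp_assoc]
    _ = C μ + (μ - μ₀) • (j.comp F) := by rw [h1, ContinuousLinearMap.comp_smul]
    _ = 1 + (μ - μ₀) • K := by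
          rw [hC, add_assoc, ← smul_add, hK₂, sub_add_cancel]
  refine ⟨d, N, ?_, ?_, ?_⟩
  · intro w hw; exact hdanal w (hWanal w hw)
  · intro w hw
    exact ((hdanal w (hWanal w hw)).smul (hCianal w hw)).sub
      ((hCianal w hw).mul (analyticAt_clm_comp analyticAt_const
        (analyticAt_clm_comp (hQanal w (hWanal w hw)) (hmanal w hw))))
  · intro μ hμ
    have hCC1 : C μ * Ci μ = 1 := Ring.mul_inverse_cancel _ (hCunit μ hμ)
    have hCC2 : Ci μ * C μ = 1 := Ring.inverse_mul_cancel _ (hCunit μ hμ)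
    -- the inverse construction when d μ ≠ 0
    have hconstruct : ∀ hdμ : d μ ≠ 0,
        (1 + (μ - μ₀) • K) * ((d μ)⁻¹ • N μ) = 1 ∧
        ((d μ)⁻¹ • N μ) * (1 + (μ - μ₀) • K) = 1 := by
      intro hdμ
      obtain ⟨hi1, hi2⟩ := hdinv μ hdμ
      set P : V →L[ℂ] V := (d μ)⁻¹ • Q μ with hP
      have hWform : W μ = 1 + (m μ).comp j := rfl
      obtain ⟨ho1, ho2⟩ := oneAdd_comp_inv (m μ) j P (by rw [← hWform]; exact hi1)
        (by rw [← hWform]; exact hi2)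
      -- (d μ)⁻¹ • N μ = Ci μ * (1 - j ∘ P ∘ m μ)
      have hNQ : (d μ)⁻¹ • N μ = Ci μ * (1 - j.comp (P.comp (m μ))) := by
        have e1 : j.comp (P.comp (m μ)) = (d μ)⁻¹ • (j.comp ((Q μ).comp (m μ))) := by
          rw [hP, ContinuousLinearMap.smul_comp, ContinuousLinearMap.comp_smul]
        rw [e1, hN, smul_sub, smul_smul, inv_mul_cancel₀ hdμ, one_smul, mul_sub, mul_one,
          mul_smul_comm]
      rw [hfac μ hμ, hNQ]
      constructor
      · calc (1 + j.comp (m μ)) * C μ * (Ci μ * (1 - j.comp (P.comp (m μ))))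
            = (1 + j.comp (m μ)) * (C μ * Ci μ) * (1 - j.comp (P.comp (m μ))) := by noncomm_ring
        _ = (1 + j.comp (m μ)) * (1 - j.comp (P.comp (m μ))) := by rw [hCC1, mul_one]
        _ = 1 := by rw [ContinuousLinearMap.mul_def]; exact ho1
      · calc Ci μ * (1 - j.comp (P.comp (m μ))) * ((1 + j.comp (m μ)) * C μ)
            = Ci μ * ((1 - j.comp (P.comp (m μ))) * (1 + j.comp (m μ))) * C μ := by noncomm_ring
        _ = Ci μ * C μ := by
              rw [show (1 - j.comp (P.comp (m μ))) * (1 + j.comp (m μ)) = 1 from by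
                rw [ContinuousLinearMap.mul_def]; exact ho2, mul_one]
        _ = 1 := hCC2
    refine ⟨⟨?_, fun hdμ => ⟨(d μ)⁻¹ • N μ, (hconstruct hdμ).1, (hconstruct hdμ).2⟩⟩, hconstruct⟩
    rintro ⟨G, hG1, hG2⟩
    -- 1 + j ∘ m μ has two-sided inverse C μ * G
    have hfacμ := hfac μ hμ
    have h1 : (1 + j.comp (m μ)) * (C μ * G) = 1 := by
      rw [← mul_assoc, ← hfacμ]; exact hG1
    have h2 : (C μ * G) * (1 + j.comp (m μ)) = 1 := by
      have e1 : G * (1 + j.comp (m μ)) * C μ = 1 := by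
        calc G * (1 + j.comp (m μ)) * C μ = G * ((1 + j.comp (m μ)) * C μ) := by noncomm_ring
        _ = 1 := by rw [← hfacμ]; exact hG2
      have e2 : G * (1 + j.comp (m μ)) = Ci μ := by
        calc G * (1 + j.comp (m μ)) = G * (1 + j.comp (m μ)) * (C μ * Ci μ) := by
              rw [hCC1, mul_one]
        _ = (G * (1 + j.comp (m μ)) * C μ) * Ci μ := by noncomm_ring
        _ = Ci μ := by rw [e1, one_mul]
      calc (C μ * G) * (1 + j.comp (m μ)) = C μ * (G * (1 + j.comp (m μ))) := by noncomm_ring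
      _ = C μ * Ci μ := by rw [e2]
      _ = 1 := hCC1
    obtain ⟨hw1, hw2⟩ := oneAdd_comp_inv j (m μ) (C μ * G)
      (by rw [← ContinuousLinearMap.mul_def]; exact h1)
      (by rw [← ContinuousLinearMap.mul_def]; exact h2)
    exact (hdiff μ).mp ⟨_, hw1, hw2⟩


/-- Uniqueness of two-sided inverses. -/
lemma inverse_unique {E F : Type*} [NormedAddCommGroup E] [NormedSpace ℂ E]
    [NormedAddCommGroup F] [NormedSpace ℂ F] (P : E →L[ℂ] F) (X Y : F →L[ℂ] E)
    (h1 : P.comp X = ContinuousLinearMap.id ℂ F) (h2 : Y.comp P = ContinuousLinearMap.id ℂ E) :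
    Y = X := by
  calc Y = Y.comp (P.comp X) := by rw [h1, ContinuousLinearMap.comp_id]
  _ = (Y.comp P).comp X := (ContinuousLinearMap.comp_assoc _ _ _).symm
  _ = X := by rw [h2, ContinuousLinearMap.id_comp]

end Stmt2Aux

open Stmt2Aux Metric Filter

/-- With `T` Fredholm of index zero, `A` compact relative to
`T` (via the compact embedding `ι`), and `T + μ₀ A` invertible, any function
`R : ℂ → (H →L H₁)` which inverts `T + μ A` whenever an inverse exists is a
meromorphic operator-valued function of `μ` on all of `ℂ` (finite-order poles
at the discrete set `Σ` where `T + μ A` fails to be invertible). -/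
theorem stmt2
    {H₁ H : Type*}
    [NormedAddCommGroup H₁] [InnerProductSpace ℂ H₁] [CompleteSpace H₁]
    [NormedAddCommGroup H] [InnerProductSpace ℂ H] [CompleteSpace H]
    (ι : H₁ →L[ℂ] H) (hι : IsCompactOperator (⇑ι))
    (T : H₁ →L[ℂ] H)
    (hkerfin : FiniteDimensional ℂ (LinearMap.ker (T : H₁ →ₗ[ℂ] H)))
    (hcokerfin : FiniteDimensional ℂ (H ⧸ LinearMap.range (T : H₁ →ₗ[ℂ] H)))
    (hidx : Module.finrank ℂ (LinearMap.ker (T : H₁ →ₗ[ℂ] H))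
      = Module.finrank ℂ (H ⧸ LinearMap.range (T : H₁ →ₗ[ℂ] H)))
    (A : H →L[ℂ] H) (μ₀ : ℂ)
    (h₀ : ∃ S : H →L[ℂ] H₁,
      (T + μ₀ • A.comp ι).comp S = ContinuousLinearMap.id ℂ H ∧
      S.comp (T + μ₀ • A.comp ι) = ContinuousLinearMap.id ℂ H₁)
    (R : ℂ → H →L[ℂ] H₁)
    (hR : ∀ μ : ℂ,
      (∃ S : H →L[ℂ] H₁,
        (T + μ • A.comp ι).comp S = ContinuousLinearMap.id ℂ H ∧
        S.comp (T + μ • A.comp ι) = ContinuousLinearMap.id ℂ H₁) →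
      ((T + μ • A.comp ι).comp (R μ) = ContinuousLinearMap.id ℂ H ∧
        (R μ).comp (T + μ • A.comp ι) = ContinuousLinearMap.id ℂ H₁)) :
    ∀ z : ℂ, MeromorphicAt R z := by
  classical
  obtain ⟨S, hS1, hS2⟩ := h₀
  set B : H₁ →L[ℂ] H := T + μ₀ • A.comp ι with hB
  set K : H₁ →L[ℂ] H₁ := S.comp (A.comp ι) with hK
  have hKcomp : IsCompactOperator (⇑K) := by
    have h1 : IsCompactOperator (⇑A ∘ ⇑ι) := hι.continuous_comp A.continuous
    have h2 : IsCompactOperator (⇑S ∘ (⇑A ∘ ⇑ι)) := h1.continuous_comp S.continuous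
    simpa [hK, ContinuousLinearMap.coe_comp, Function.comp_assoc] using h2
  set Op : ℂ → H₁ →L[ℂ] H₁ := fun μ => 1 + (μ - μ₀) • K with hOp
  have hfac : ∀ μ : ℂ, T + μ • A.comp ι = B.comp (Op μ) := by
    intro μ
    have e1 : B.comp K = A.comp ι := by
      rw [hK, ← ContinuousLinearMap.comp_assoc, hS1, ContinuousLinearMap.id_comp]
    symm
    calc B.comp (Op μ) = B.comp (1 + (μ - μ₀) • K) := rfl
    _ = B + (μ - μ₀) • (A.comp ι) := by
        rw [ContinuousLinearMap.comp_add, ContinuousLinearMap.comp_smul, e1,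
          ContinuousLinearMap.one_def, ContinuousLinearMap.comp_id]
    _ = T + μ • A.comp ι := by
        rw [hB, add_assoc, ← add_smul, add_sub_cancel]
  have hTrans : ∀ (μ : ℂ) (G : H₁ →L[ℂ] H₁), Op μ * G = 1 → G * Op μ = 1 →
      (T + μ • A.comp ι).comp (G.comp S) = ContinuousLinearMap.id ℂ H ∧
      (G.comp S).comp (T + μ • A.comp ι) = ContinuousLinearMap.id ℂ H₁ := by
    intro μ G hG1 hG2
    rw [ContinuousLinearMap.mul_def] at hG1 hG2
    constructor
    · calc (T + μ • A.comp ι).comp (G.comp S) = (B.comp (Op μ)).comp (G.comp S) := by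
            rw [hfac μ]
      _ = B.comp (((Op μ).comp G).comp S) := by
            rw [ContinuousLinearMap.comp_assoc, ContinuousLinearMap.comp_assoc]
      _ = ContinuousLinearMap.id ℂ H := by
            rw [hG1, ContinuousLinearMap.one_def, ContinuousLinearMap.id_comp, hS1]
    · calc (G.comp S).comp (T + μ • A.comp ι) = (G.comp S).comp (B.comp (Op μ)) := by
            rw [hfac μ]
      _ = G.comp ((S.comp B).comp (Op μ)) := by
            rw [ContinuousLinearMap.comp_assoc, ContinuousLinearMap.comp_assoc]
      _ = ContinuousLinearMap.id ℂ H₁ := by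
            rw [hS2, ContinuousLinearMap.id_comp, hG2, ContinuousLinearMap.one_def]
  set InvOp : ℂ → Prop := fun μ => ∃ G : H₁ →L[ℂ] H₁, Op μ * G = 1 ∧ G * Op μ = 1 with hInvOp
  have hInvTrans : ∀ μ : ℂ,
      (∃ Rm : H →L[ℂ] H₁,
        (T + μ • A.comp ι).comp Rm = ContinuousLinearMap.id ℂ H ∧
        Rm.comp (T + μ • A.comp ι) = ContinuousLinearMap.id ℂ H₁) ↔ InvOp μ := by
    intro μ
    constructor
    · rintro ⟨Rm, h1, h2⟩
      refine ⟨Rm.comp B, ?_, ?_⟩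
      · rw [ContinuousLinearMap.mul_def]
        have e1 : (Op μ).comp Rm = S := by
          have e2 : B.comp ((Op μ).comp Rm) = ContinuousLinearMap.id ℂ H := by
            rw [← ContinuousLinearMap.comp_assoc, ← hfac μ]; exact h1
          calc (Op μ).comp Rm
              = (S.comp B).comp ((Op μ).comp Rm) := by
                rw [hS2, ContinuousLinearMap.id_comp]
          _ = S.comp (B.comp ((Op μ).comp Rm)) := ContinuousLinearMap.comp_assoc _ _ _
          _ = S := by rw [e2, ContinuousLinearMap.comp_id]
        calc (Op μ).comp (Rm.comp B) = ((Op μ).comp Rm).comp B :=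
              (ContinuousLinearMap.comp_assoc _ _ _).symm
        _ = S.comp B := by rw [e1]
        _ = 1 := by rw [hS2]; rfl
      · rw [ContinuousLinearMap.mul_def]
        calc (Rm.comp B).comp (Op μ) = Rm.comp (B.comp (Op μ)) :=
              ContinuousLinearMap.comp_assoc _ _ _
        _ = Rm.comp (T + μ • A.comp ι) := by rw [← hfac μ]
        _ = 1 := by rw [h2]; rfl
    · rintro ⟨G, hG1, hG2⟩
      exact ⟨G.comp S, hTrans μ G hG1 hG2⟩
  -- the set where the family is locally nowhere invertible is clopen, hence empty
  set Ω : Set ℂ := {w : ℂ | ∀ᶠ μ in nhds w, ¬ InvOp μ} with hΩ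
  have hΩopen : IsOpen Ω := isOpen_setOf_eventually_nhds
  have hΩclosed : IsClosed Ω := by
    rw [← closure_subset_iff_isClosed]
    intro w hw
    obtain ⟨d, N, hdanal, hNanal, hprop⟩ := local_structure K hKcomp μ₀ w
    obtain ⟨z', hz'ball, hz'Ω⟩ := _root_.mem_closure_iff.1 hw (ball w 1) isOpen_ball
      (mem_ball_self one_pos)
    have hev : ∀ᶠ μ in nhds z', d μ = 0 := by
      filter_upwards [hz'Ω, isOpen_ball.mem_nhds hz'ball] with μ h1 h2
      by_contra hne
      exact h1 (((hprop μ h2).1).mpr hne)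
    have hEq : Set.EqOn d 0 (ball w 1) :=
      AnalyticOnNhd.eqOn_zero_of_preconnected_of_eventuallyEq_zero
        (fun μ hμ => hdanal μ hμ) (convex_ball w 1).isPreconnected hz'ball hev
    show ∀ᶠ μ in nhds w, ¬ InvOp μ
    filter_upwards [isOpen_ball.mem_nhds (mem_ball_self one_pos)] with μ hμball hInv
    exact (((hprop μ hμball).1).mp hInv) (by simpa using hEq hμball)
  have hΩempty : Ω = ∅ := by
    rcases isClopen_iff.mp ⟨hΩclosed, hΩopen⟩ with h | h
    · exact h
    · exfalso
      have hμ₀ : InvOp μ₀ := by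
        refine ⟨1, ?_, ?_⟩ <;> simp [hOp]
      have : μ₀ ∈ Ω := h ▸ Set.mem_univ μ₀
      exact this.self_of_nhds hμ₀
  -- now prove meromorphy at every point
  intro z
  obtain ⟨d, N, hdanal, hNanal, hprop⟩ := local_structure K hKcomp μ₀ z
  have hzΩ : z ∉ Ω := by rw [hΩempty]; exact Set.notMem_empty z
  have hfreq : ∃ᶠ μ in nhds z, InvOp μ := by
    have := not_eventually.mp hzΩ
    exact this.mono fun μ h => not_not.mp h
  have hfreqd : ∃ᶠ μ in nhds z, d μ ≠ 0 :=
    (hfreq.and_eventually (isOpen_ball.mem_nhds (mem_ball_self one_pos))).mono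
      fun μ h => ((hprop μ h.2).1).mp h.1
  have hdz : AnalyticAt ℂ d z := hdanal z (mem_ball_self one_pos)
  rcases hdz.eventually_eq_zero_or_eventually_ne_zero with h | h
  · obtain ⟨μ, hne, h0⟩ := (hfreqd.and_eventually h).exists
    exact absurd h0 hne
  · set g : ℂ → H →L[ℂ] H₁ := fun μ => (N μ).comp S with hg
    have hganal : AnalyticAt ℂ g z :=
      analyticAt_clm_comp (hNanal z (mem_ball_self one_pos)) analyticAt_const
    have hmero : MeromorphicAt (fun μ => (d μ)⁻¹ • g μ) z := by
      have h1 : MeromorphicAt d⁻¹ z := hdz.meromorphicAt.inv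
      have h2 : MeromorphicAt (d⁻¹ • g) z := h1.smul hganal.meromorphicAt
      exact h2
    apply hmero.congr
    have hball : ∀ᶠ μ in nhdsWithin z {z}ᶜ, μ ∈ ball z 1 :=
      eventually_nhdsWithin_of_eventually_nhds
        (isOpen_ball.mem_nhds (mem_ball_self one_pos))
    filter_upwards [h, hball] with μ hdμ hμball
    obtain ⟨hc1, hc2⟩ := (hprop μ hμball).2 hdμ
    obtain ⟨ht1, ht2⟩ := hTrans μ ((d μ)⁻¹ • N μ) hc1 hc2
    obtain ⟨hr1, hr2⟩ := hR μ ((hInvTrans μ).mpr ⟨(d μ)⁻¹ • N μ, hc1, hc2⟩)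
    have huniq : R μ = ((d μ)⁻¹ • N μ).comp S :=
      inverse_unique (T + μ • A.comp ι) (((d μ)⁻¹ • N μ).comp S) (R μ) ht1 hr2
    rw [huniq, ContinuousLinearMap.smul_comp]
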